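/- Let N ≥ 1 be a real number, K ≥ 0, and 0 < R ≤ ∞. Let f : (0,R) → [0,∞) be measurable and integrable on (0,r) for every r < R, and set F(r) := ∫₀^r f(s) ds. Assume that F(r) > 0 for every r ∈ (0,R) and that f(r) ≥ K·F(r)^{(N−1)/N} for almost every r ∈ (0,R). Then F(r) ≥ (K·r/N)^N for every r ∈ (0,R). -/

import Mathlib

open MeasureTheory
open scoped ENNReal

/-- Gronwall-type integral inequality behind the isoperimetric almost-regularity
theorem. -/
theorem stmt5 (N K : ℝ) (hN : 1 ≤ N) (hK : 0 ≤ K) (R : ℝ≥0∞) (hR : 0 < R)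
    (f F : ℝ → ℝ) (hmeas : Measurable f)
    (hnonneg : ∀ s : ℝ, 0 < s → ENNReal.ofReal s < R → 0 ≤ f s)
    (hint : ∀ r : ℝ, 0 < r → ENNReal.ofReal r < R → IntegrableOn f (Set.Ioc 0 r))
    (hF : ∀ r : ℝ, F r = ∫ s in (0:ℝ)..r, f s)
    (hFpos : ∀ r : ℝ, 0 < r → ENNReal.ofReal r < R → 0 < F r)
    (hae : ∀ᵐ r ∂(volume : Measure ℝ), 0 < r → ENNReal.ofReal r < R →
      K * F r ^ ((N - 1) / N) ≤ f r) :
    ∀ r : ℝ, 0 < r → ENNReal.ofReal r < R → (K * r / N) ^ N ≤ F r := by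
  intro b hb hbR
  have hN0 : (0:ℝ) < N := lt_of_lt_of_le one_pos hN
  set p : ℝ := (N - 1) / N with hp_def
  have hp : 0 ≤ p := div_nonneg (by linarith) hN0.le
  -- interval integrability of f on [0, b]
  have hfib : IntervalIntegrable f volume 0 b :=
    (intervalIntegrable_iff_integrableOn_Ioc_of_le hb.le).2 (hint b hb hbR)
  -- continuity of F on Icc 0 b
  have hFcont : ContinuousOn F (Set.Icc 0 b) := by
    have h0 : (0:ℝ) ∈ Set.uIcc (0:ℝ) b := Set.left_mem_uIcc
    have := intervalIntegral.continuousOn_primitive_interval' hfib h0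
    rw [Set.uIcc_of_le hb.le] at this
    exact this.congr fun x _ => hF x
  -- the key estimate for each ε ∈ (0, b)
  have key : ∀ ε : ℝ, 0 < ε → ε < b → K / N * (b - ε) ≤ F b ^ (1 / N) := by
    intro ε hε hεb
    have hεR : ENNReal.ofReal ε < R :=
      lt_of_le_of_lt (ENNReal.ofReal_le_ofReal hεb.le) hbR
    have hFε : 0 < F ε := hFpos ε hε hεR
    set g : ℝ → ℝ := fun s => K * F s ^ p with hg_def
    have hIcc : Set.Icc ε b ⊆ Set.Icc 0 b := Set.Icc_subset_Icc hε.le le_rfl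
    have hgcont : ContinuousOn g (Set.Icc ε b) := by
      exact continuousOn_const.mul ((hFcont.mono hIcc).rpow_const fun x _ => Or.inr hp)
    have hgint : ∀ t ∈ Set.Icc ε b, IntervalIntegrable g volume ε t := by
      intro t ht
      apply ContinuousOn.intervalIntegrable
      apply hgcont.mono
      rw [Set.uIcc_of_le ht.1]
      exact Set.Icc_subset_Icc le_rfl ht.2
    have hfint : ∀ t ∈ Set.Icc ε b, IntervalIntegrable f volume ε t := by
      intro t ht
      rw [intervalIntegrable_iff_integrableOn_Ioc_of_le ht.1]
      exact (hint b hb hbR).mono_set (Set.Ioc_subset_Ioc hε.le ht.2)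
    set A : ℝ → ℝ := fun t => F ε + ∫ s in ε..t, g s with hA_def
    -- A ≤ F on [ε, b]
    have hAF : ∀ t ∈ Set.Icc ε b, A t ≤ F t := by
      intro t ht
      have hft : IntervalIntegrable f volume 0 t :=
        (intervalIntegrable_iff_integrableOn_Ioc_of_le (hε.trans_le ht.1).le).2
          ((hint b hb hbR).mono_set (Set.Ioc_subset_Ioc le_rfl ht.2))
      have hfε : IntervalIntegrable f volume 0 ε :=
        (intervalIntegrable_iff_integrableOn_Ioc_of_le hε.le).2
          ((hint b hb hbR).mono_set (Set.Ioc_subset_Ioc le_rfl hεb.le))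
      have hsub : F t - F ε = ∫ s in ε..t, f s := by
        rw [hF t, hF ε]
        exact intervalIntegral.integral_interval_sub_left hft hfε
      have hmono : (∫ s in ε..t, g s) ≤ ∫ s in ε..t, f s := by
        apply intervalIntegral.integral_mono_ae_restrict ht.1 (hgint t ht) (hfint t ht)
        have h1 : ∀ᵐ s ∂(volume.restrict (Set.Icc ε t)),
            0 < s → ENNReal.ofReal s < R → K * F s ^ p ≤ f s := ae_restrict_of_ae hae
        have h2 : ∀ᵐ s ∂(volume.restrict (Set.Icc ε t)), s ∈ Set.Icc ε t :=
          ae_restrict_mem measurableSet_Icc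
        filter_upwards [h1, h2] with s hs1 hs2
        exact hs1 (hε.trans_le hs2.1)
          (lt_of_le_of_lt (ENNReal.ofReal_le_ofReal (hs2.2.trans ht.2)) hbR)
      have : A t ≤ F ε + ∫ s in ε..t, f s := by
        simpa [hA_def] using hmono
      linarith [hsub]
    -- A is positive on [ε, b]
    have hApos : ∀ t ∈ Set.Icc ε b, 0 < A t := by
      intro t ht
      have hnn : 0 ≤ ∫ s in ε..t, g s := by
        apply intervalIntegral.integral_nonneg ht.1
        intro u hu
        have hu0 : 0 < u := lt_of_lt_of_le hε hu.1
        have huR : ENNReal.ofReal u < R :=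
          lt_of_le_of_lt (ENNReal.ofReal_le_ofReal (hu.2.trans ht.2)) hbR
        exact mul_nonneg hK (Real.rpow_nonneg (hFpos u hu0 huR).le p)
      have : 0 < F ε + ∫ s in ε..t, g s := by positivity
      simpa [hA_def] using this
    -- A is continuous on [ε, b]
    have hAcont : ContinuousOn A (Set.Icc ε b) := by
      apply continuousOn_const.add
      have hεmem : ε ∈ Set.uIcc ε b := Set.left_mem_uIcc
      have := intervalIntegral.continuousOn_primitive_interval'
        ((hgint b (Set.right_mem_Icc.2 hεb.le)).mono_set ?_) hεmem
      · rw [Set.uIcc_of_le hεb.le] at this; exact this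
      · rw [Set.uIcc_of_le hεb.le]
    -- A has derivative g t at interior points
    have hAderiv : ∀ t ∈ Set.Ioo ε b, HasDerivAt A (g t) t := by
      intro t ht
      have htm : t ∈ Set.Icc ε b := Set.Ioo_subset_Icc_self ht
      have hgct : ContinuousAt g t := by
        have : ContinuousOn g (Set.Ioo ε b) := hgcont.mono Set.Ioo_subset_Icc_self
        exact this.continuousAt (isOpen_Ioo.mem_nhds ht)
      have hsm : StronglyMeasurableAtFilter g (nhds t) volume := by
        refine ContinuousOn.stronglyMeasurableAtFilter isOpen_Ioo
          (hgcont.mono Set.Ioo_subset_Icc_self) t ht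
      have := intervalIntegral.integral_hasDerivAt_right (hgint t htm) hsm hgct
      simpa [hA_def] using this.const_add (F ε)
    -- B = A ^ (1/N)
    set B : ℝ → ℝ := fun t => A t ^ (1 / N) with hB_def
    have hBcont : ContinuousOn B (Set.Icc ε b) :=
      hAcont.rpow_const fun x hx => Or.inl (hApos x hx).ne'
    have hBderiv : ∀ t ∈ Set.Ioo ε b,
        HasDerivAt B (g t * (1 / N) * A t ^ (1 / N - 1)) t := by
      intro t ht
      exact (hAderiv t ht).rpow_const (Or.inl (hApos t (Set.Ioo_subset_Icc_self ht)).ne')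
    have hBdiff : DifferentiableOn ℝ B (interior (Set.Icc ε b)) := by
      rw [interior_Icc]
      exact fun t ht => ((hBderiv t ht).differentiableAt).differentiableWithinAt
    have hBbound : ∀ t ∈ interior (Set.Icc ε b), K / N ≤ deriv B t := by
      rw [interior_Icc]
      intro t ht
      rw [(hBderiv t ht).deriv]
      have htm : t ∈ Set.Icc ε b := Set.Ioo_subset_Icc_self ht
      have hAt : 0 < A t := hApos t htm
      have hFt : A t ≤ F t := hAF t htm
      have h1 : A t ^ p ≤ F t ^ p := Real.rpow_le_rpow hAt.le hFt hp
      have hexp : 1 / N - 1 = -p := by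
        field_simp [hp_def]
        have hNp : N * p = N - 1 := by rw [hp_def]; field_simp
        linarith
      have h2 : A t ^ (1 / N - 1) = (A t ^ p)⁻¹ := by
        rw [hexp, Real.rpow_neg hAt.le]
      have hAp : 0 < A t ^ p := Real.rpow_pos_of_pos hAt p
      have : K / N ≤ K * A t ^ p * (1 / N) * (A t ^ p)⁻¹ := by
        rw [mul_comm (K * A t ^ p) (1/N), mul_assoc, mul_inv_cancel_right₀ hAp.ne']
        ring_nf
        rw [mul_comm]
      calc K / N ≤ K * A t ^ p * (1 / N) * (A t ^ p)⁻¹ := this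
        _ ≤ g t * (1 / N) * A t ^ (1 / N - 1) := by
            rw [h2, hg_def]
            have : K * A t ^ p ≤ K * F t ^ p := mul_le_mul_of_nonneg_left h1 hK
            apply mul_le_mul_of_nonneg_right
            · exact mul_le_mul_of_nonneg_right this (by positivity)
            · positivity
    -- mean value inequality
    have hmvt := (convex_Icc ε b).mul_sub_le_image_sub_of_le_deriv hBcont hBdiff hBbound
      ε (Set.left_mem_Icc.2 hεb.le) b (Set.right_mem_Icc.2 hεb.le) hεb.le
    -- B ε = F ε ^ (1/N)
    have hBε : B ε = F ε ^ (1 / N) := by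
      simp [hB_def, hA_def]
    have hBb : B b ≤ F b ^ (1 / N) := by
      apply Real.rpow_le_rpow (hApos b (Set.right_mem_Icc.2 hεb.le)).le
        (hAF b (Set.right_mem_Icc.2 hεb.le)) (by positivity)
    have hFε' : 0 ≤ F ε ^ (1 / N) := Real.rpow_nonneg hFε.le _
    calc K / N * (b - ε) ≤ B b - B ε := hmvt
      _ ≤ F b ^ (1 / N) - F ε ^ (1 / N) := by rw [hBε]; linarith [hBb]
      _ ≤ F b ^ (1 / N) := by linarith
  -- take the limit ε → 0⁺
  have hlim : K / N * b ≤ F b ^ (1 / N) := by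
    have htend : Filter.Tendsto (fun ε : ℝ => K / N * (b - ε)) (nhdsWithin 0 (Set.Ioi 0))
        (nhds (K / N * (b - 0))) := by
      exact ((continuous_const.mul (continuous_const.sub continuous_id)).tendsto 0).mono_left
        nhdsWithin_le_nhds
    rw [sub_zero] at htend
    apply le_of_tendsto htend
    filter_upwards [Ioo_mem_nhdsGT_of_mem (Set.mem_Ico.2 ⟨le_rfl, hb⟩)] with ε hε
    exact key ε hε.1 hε.2
  -- conclude
  have hKb : 0 ≤ K * b / N := by positivity
  have h1 : K * b / N ≤ F b ^ (1 / N) := by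
    calc K * b / N = K / N * b := by ring
      _ ≤ F b ^ (1 / N) := hlim
  have h2 : (K * b / N) ^ N ≤ (F b ^ (1 / N)) ^ N :=
    Real.rpow_le_rpow hKb h1 hN0.le
  calc (K * b / N) ^ N ≤ (F b ^ (1 / N)) ^ N := h2
    _ = F b ^ (1 / N * N) := by rw [← Real.rpow_mul (hFpos b hb hbR).le]
    _ = F b := by rw [one_div_mul_cancel hN0.ne', Real.rpow_one]
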